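/- In the concatenation graph CG(w_1,...,w_n) with w_1 = 0 and w_j ≥ 0, the shortest 1⇝n path has length at most (μ*/2)·∑_{ℓ=1}^n w_ℓ, where μ* < 3.5912 is the unique solution of μ ln μ = μ + 1. -/

import Mathlib

set_option maxHeartbeats 1000000


/-- Length of a path (given as the increasing list of visited nodes) in the
concatenation graph `CG(w_1,...,w_n)`: the arc `(i,j)` has length `(n - (i+j)/2) * w j`. -/
noncomputable def cgLen (n : ℕ) (w : ℕ → ℝ) : List ℕ → ℝ
  | i :: j :: rest => ((n : ℝ) - ((i : ℝ) + (j : ℝ)) / 2) * w j + cgLen n w (j :: rest)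
  | _ => 0

/-- A valid `1 ⇝ n` path in the concatenation graph. -/
def IsCGPath (n : ℕ) (p : List ℕ) : Prop :=
  p.Chain' (· < ·) ∧ p.head? = some 1 ∧ p.getLast? = some n ∧ ∀ j ∈ p, 1 ≤ j ∧ j ≤ n

/-- integrand helper -/
noncomputable def cgG (n : ℕ) (w : ℕ → ℝ) (y : ℝ) : ℝ :=
  if ⌊y⌋₊ ≤ n - 2 then y * w (n - ⌊y⌋₊) else 0

noncomputable def cgH (n : ℕ) (w : ℕ → ℝ) (μ : ℝ) (τ : ℝ) : ℝ :=
  cgG n w (Real.exp (τ * Real.log μ))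

noncomputable def cgF (n : ℕ) (w : ℕ → ℝ) (μ : ℝ) (t : ℝ) : ℝ :=
  (μ + 1) / 2 * ∑ k ∈ Finset.range n, cgH n w μ (t + k)
    + Real.exp (t * Real.log μ) / 2 * w n

/-- the tail of the constructed path: `[n - b k, n - b (k-1), …, n - b 0, n]`. -/
def cgTail (n : ℕ) (b : ℕ → ℕ) : ℕ → List ℕ
  | 0 => [n - b 0, n]
  | k + 1 => (n - b (k + 1)) :: cgTail n b k

lemma cgTail_head (n : ℕ) (b : ℕ → ℕ) (k : ℕ) :
    ∃ l, cgTail n b k = (n - b k) :: l := by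
  cases k <;> exact ⟨_, rfl⟩

lemma cgTail_getLast (n : ℕ) (b : ℕ → ℕ) (k : ℕ) :
    (cgTail n b k).getLast? = some n := by
  induction k with
  | zero => rfl
  | succ k ih =>
    obtain ⟨l, hl⟩ := cgTail_head n b k
    rw [cgTail, hl, List.getLast?_cons_cons, ← hl, ih]

lemma cgTail_mem (n : ℕ) (b : ℕ → ℕ) (k : ℕ) :
    ∀ j ∈ cgTail n b k, j = n ∨ ∃ i, i ≤ k ∧ j = n - b i := by
  induction k with
  | zero =>
    intro j hj
    simp only [cgTail, List.mem_cons, List.not_mem_nil, or_false] at hj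
    rcases hj with h | h
    · exact Or.inr ⟨0, le_rfl, h⟩
    · exact Or.inl h
  | succ k ih =>
    intro j hj
    rw [cgTail, List.mem_cons] at hj
    rcases hj with h | h
    · exact Or.inr ⟨k + 1, le_rfl, h⟩
    · rcases ih j h with h' | ⟨i, hi, hj'⟩
      · exact Or.inl h'
      · exact Or.inr ⟨i, hi.trans (Nat.le_succ k), hj'⟩

lemma cgTail_chain (n : ℕ) (b : ℕ → ℕ) (hn : 2 ≤ n)
    (hstep : ∀ i, b i < b (i + 1)) (hb1 : ∀ i, 1 ≤ b i) :
    ∀ k, (∀ i ≤ k, b i ≤ n - 2) → ∀ j, j < n - b k →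
      List.Chain' (· < ·) (j :: cgTail n b k) := by
  intro k
  induction k with
  | zero =>
    intro hle j hj
    have h1 : b 0 ≤ n - 2 := hle 0 le_rfl
    have h2 : n - b 0 < n := by have := hb1 0; omega
    exact List.isChain_cons_cons.2 ⟨hj, List.isChain_cons_cons.2 ⟨h2, List.isChain_singleton n⟩⟩
  | succ k ih =>
    intro hle j hj
    have h1 : b k ≤ n - 2 := hle k (Nat.le_succ k)
    have h2 : b (k + 1) ≤ n - 2 := hle (k + 1) le_rfl
    have h3 : n - b (k + 1) < n - b k := by have := hstep k; omega
    rw [cgTail]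
    exact List.isChain_cons_cons.2 ⟨hj, ih (fun i hi => hle i (hi.trans (Nat.le_succ k)))
      (n - b (k + 1)) h3⟩

lemma cgG_nonneg (n : ℕ) (w : ℕ → ℝ) (hw : ∀ j, 0 ≤ w j) (y : ℝ) (hy : 0 ≤ y) :
    0 ≤ cgG n w y := by
  unfold cgG
  split
  · exact mul_nonneg hy (hw _)
  · exact le_refl _

lemma cgTail_len_le (n : ℕ) (hn : 2 ≤ n) (w : ℕ → ℝ) (hw : ∀ j, 0 ≤ w j)
    (μ : ℝ) (hμ0 : 0 ≤ μ) (X : ℕ → ℝ) (b : ℕ → ℕ)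
    (hfloor : ∀ i, b i = ⌊X i⌋₊) (hX0 : ∀ i, 0 ≤ X i)
    (hstep : ∀ i, X (i + 1) = μ * X i) :
    ∀ k, (∀ i ≤ k, b i ≤ n - 2) →
      cgLen n w (cgTail n b k) ≤
        (μ + 1) / 2 * ∑ i ∈ Finset.range k, cgG n w (X i) + X 0 / 2 * w n := by
  have hbX : ∀ i, (b i : ℝ) ≤ X i := fun i => (hfloor i) ▸ Nat.floor_le (hX0 i)
  intro k
  induction k with
  | zero =>
    intro hle
    have hb0 : b 0 ≤ n := le_trans (hle 0 le_rfl) (by omega)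
    have hcast : ((n - b 0 : ℕ) : ℝ) = (n : ℝ) - (b 0 : ℝ) := by
      push_cast [Nat.cast_sub hb0]; ring
    simp only [cgTail, cgLen, hcast, Finset.range_zero, Finset.sum_empty, mul_zero, zero_add]
    have : ((n : ℝ) - ((n : ℝ) - (b 0 : ℝ) + (n : ℝ)) / 2) = (b 0 : ℝ) / 2 := by ring
    rw [this]
    have := hbX 0
    have := hw n
    nlinarith
  | succ k ih =>
    intro hle
    obtain ⟨l, hl⟩ := cgTail_head n b k
    have hbk : b k ≤ n - 2 := hle k (Nat.le_succ k)
    have hbk1 : b (k + 1) ≤ n - 2 := hle (k + 1) le_rfl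
    have hcast1 : ((n - b (k + 1) : ℕ) : ℝ) = (n : ℝ) - (b (k + 1) : ℝ) := by
      have : b (k + 1) ≤ n := by omega
      push_cast [Nat.cast_sub this]; ring
    have hcast2 : ((n - b k : ℕ) : ℝ) = (n : ℝ) - (b k : ℝ) := by
      have : b k ≤ n := by omega
      push_cast [Nat.cast_sub this]; ring
    have hunfold : cgLen n w (cgTail n b (k + 1)) =
        ((n : ℝ) - (((n - b (k + 1) : ℕ) : ℝ) + ((n - b k : ℕ) : ℝ)) / 2) * w (n - b k)
          + cgLen n w (cgTail n b k) := by
      rw [show cgTail n b (k+1) = (n - b (k+1)) :: cgTail n b k from rfl, hl]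
      simp only [cgLen]
    rw [hunfold, hcast1, hcast2]
    have hcoef : ((n : ℝ) - (((n : ℝ) - (b (k + 1) : ℝ)) + ((n : ℝ) - (b k : ℝ))) / 2)
        = ((b (k + 1) : ℝ) + (b k : ℝ)) / 2 := by ring
    rw [hcoef]
    have h1 : ((b (k + 1) : ℝ) + (b k : ℝ)) / 2 * w (n - b k)
        ≤ (μ + 1) / 2 * cgG n w (X k) := by
      have hG : cgG n w (X k) = X k * w (n - b k) := by
        unfold cgG
        rw [← hfloor k]
        simp [hbk]
      rw [hG]
      have hb1 : (b (k + 1) : ℝ) ≤ μ * X k := by rw [← hstep k]; exact hbX (k + 1)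
      have hb2 : (b k : ℝ) ≤ X k := hbX k
      have := hw (n - b k)
      nlinarith
    have h2 := ih (fun i hi => hle i (hi.trans (Nat.le_succ k)))
    rw [Finset.sum_range_succ]
    linarith

lemma cg_pointwise (n : ℕ) (hn : 2 ≤ n) (w : ℕ → ℝ) (hw : ∀ j, 0 ≤ w j)
    (μ : ℝ) (hμ2 : 2 ≤ μ) (hL1 : 1 ≤ Real.log μ) (t : ℝ) (ht : 0 ≤ t) :
    ∃ p, IsCGPath n p ∧ cgLen n w p ≤ cgF n w μ t := by
  have hμ0 : (0:ℝ) < μ := by linarith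
  set L := Real.log μ with hLdef
  set X : ℕ → ℝ := fun k => Real.exp ((t + k) * L) with hXdef
  set b : ℕ → ℕ := fun k => ⌊X k⌋₊ with hbdef
  have hexpL : Real.exp L = μ := Real.exp_log hμ0
  have hX0 : ∀ k, 0 ≤ X k := fun k => (Real.exp_pos _).le
  have hX1 : ∀ k, 1 ≤ X k := by
    intro k
    apply Real.one_le_exp
    have : (0:ℝ) ≤ t + k := by positivity
    nlinarith
  have hstep : ∀ k, X (k + 1) = μ * X k := by
    intro k
    have : (t + ((k:ℝ) + 1)) * L = L + (t + k) * L := by ring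
    simp only [hXdef]
    push_cast
    rw [this, Real.exp_add, hexpL]
  have hb1 : ∀ k, 1 ≤ b k := by
    intro k
    exact Nat.le_floor (by exact_mod_cast hX1 k)
  have hbX : ∀ k, (b k : ℝ) ≤ X k := fun k => Nat.floor_le (hX0 k)
  have hbstep : ∀ k, b k < b (k + 1) := by
    intro k
    have h1 : X k + 1 ≤ μ * X k := by nlinarith [hX1 k]
    have h2 : b k + 1 ≤ b (k + 1) := by
      calc b k + 1 = ⌊X k + 1⌋₊ := (Nat.floor_add_one (hX0 k)).symm
      _ ≤ ⌊X (k + 1)⌋₊ := Nat.floor_mono (by rw [hstep k]; exact h1)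
    omega
  have hbmono : ∀ i k, i ≤ k → b i ≤ b k := by
    intro i k
    induction k with
    | zero =>
      intro h
      have : i = 0 := by omega
      subst this; exact le_rfl
    | succ k ih =>
      intro h
      by_cases h' : i ≤ k
      · exact le_trans (ih h') (hbstep k).le
      · have : i = k + 1 := by omega
        subst this; exact le_rfl
  have hbn : n + 1 ≤ b n := by
    apply Nat.le_floor
    push_cast
    have h1 : ((n:ℝ)) ≤ (t + n) * L := by nlinarith [Nat.cast_nonneg (α := ℝ) n]
    calc (n:ℝ) + 1 ≤ Real.exp n := Real.add_one_le_exp _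
    _ ≤ X n := Real.exp_le_exp.2 h1
  have hHeq : ∀ k : ℕ, cgH n w μ (t + k) = cgG n w (X k) := fun k => rfl
  have hHnonneg : ∀ k : ℕ, 0 ≤ cgG n w (X k) := fun k => cgG_nonneg n w hw _ (hX0 k)
  by_cases hc : b 0 ≤ n - 2
  · -- main case
    set K := Nat.findGreatest (fun k => b k ≤ n - 2) n with hKdef
    have hKle : K ≤ n := Nat.findGreatest_le n
    have hKspec : b K ≤ n - 2 := Nat.findGreatest_spec (P := fun k => b k ≤ n - 2) (Nat.zero_le n) hc
    have hKn : K < n := by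
      rcases Nat.lt_or_ge K n with h | h
      · exact h
      · exfalso; have : K = n := le_antisymm hKle h
        rw [this] at hKspec; omega
    have hgr : ¬ (b (K + 1) ≤ n - 2) :=
      Nat.findGreatest_is_greatest (P := fun k => b k ≤ n - 2)
        (Nat.lt_succ_self K) (by omega)
    have hle : ∀ i ≤ K, b i ≤ n - 2 := fun i hi => le_trans (hbmono i K hi) hKspec
    have hnK : (n : ℝ) - 1 ≤ μ * X K := by
      have h1 : n - 1 ≤ b (K + 1) := by omega
      have h2 : ((n - 1 : ℕ) : ℝ) ≤ (b (K + 1) : ℝ) := by exact_mod_cast h1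
      have h3 : ((n - 1 : ℕ) : ℝ) = (n : ℝ) - 1 := by
        push_cast [Nat.cast_sub (by omega : 1 ≤ n)]; ring
      rw [← hstep K, ← h3]
      exact le_trans h2 (hbX (K + 1))
    refine ⟨1 :: cgTail n b K, ⟨?_, rfl, ?_, ?_⟩, ?_⟩
    · -- chain
      apply cgTail_chain n b hn hbstep hb1 K hle
      have := hb1 K
      omega
    · -- getLast?
      obtain ⟨l, hl⟩ := cgTail_head n b K
      rw [hl, List.getLast?_cons_cons, ← hl, cgTail_getLast]
    · -- membership bounds
      intro j hj
      rcases List.mem_cons.1 hj with h | h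
      · subst h; omega
      · rcases cgTail_mem n b K j h with h' | ⟨i, hi, hj'⟩
        · subst h'; omega
        · subst hj'
          have h1 := hle i hi
          have h2 := hb1 i
          omega
    · -- length bound
      obtain ⟨l, hl⟩ := cgTail_head n b K
      have hcast : ((n - b K : ℕ) : ℝ) = (n : ℝ) - (b K : ℝ) := by
        have : b K ≤ n := by omega
        push_cast [Nat.cast_sub this]; ring
      have hunfold : cgLen n w (1 :: cgTail n b K) =
          ((n : ℝ) - ((1 : ℝ) + ((n - b K : ℕ) : ℝ)) / 2) * w (n - b K)
            + cgLen n w (cgTail n b K) := by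
        rw [hl]
        simp only [cgLen]
        push_cast
        ring
      have harc : ((n : ℝ) - ((1 : ℝ) + ((n - b K : ℕ) : ℝ)) / 2) * w (n - b K)
          ≤ (μ + 1) / 2 * cgG n w (X K) := by
        rw [hcast]
        have hG : cgG n w (X K) = X K * w (n - b K) := by
          unfold cgG
          simp only [hbdef]
          exact if_pos hKspec
        rw [hG]
        have h1 : (b K : ℝ) ≤ X K := hbX K
        have := hw (n - b K)
        nlinarith
      have htail := cgTail_len_le n hn w hw μ hμ0.le X b (fun i => rfl) hX0 hstep K hle
      have hsum : ∑ i ∈ Finset.range (K + 1), cgG n w (X i)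
          ≤ ∑ i ∈ Finset.range n, cgG n w (X i) := by
        apply Finset.sum_le_sum_of_subset_of_nonneg
        · exact Finset.range_subset_range.2 (by omega)
        · intro i _ _; exact hHnonneg i
      rw [hunfold]
      unfold cgF
      simp only [hHeq]
      rw [Finset.sum_range_succ] at hsum
      have hμ1 : (0:ℝ) ≤ (μ + 1) / 2 := by linarith
      have hXw : 0 ≤ X 0 / 2 * w n := by
        have := hX0 0; have := hw n; positivity
      calc ((n : ℝ) - ((1 : ℝ) + ((n - b K : ℕ) : ℝ)) / 2) * w (n - b K)
            + cgLen n w (cgTail n b K)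
          ≤ (μ + 1) / 2 * cgG n w (X K)
            + ((μ + 1) / 2 * ∑ i ∈ Finset.range K, cgG n w (X i) + X 0 / 2 * w n) := by
            linarith
        _ = (μ + 1) / 2 * (∑ i ∈ Finset.range K, cgG n w (X i) + cgG n w (X K))
            + X 0 / 2 * w n := by ring
        _ ≤ (μ + 1) / 2 * ∑ i ∈ Finset.range n, cgG n w (X i) + X 0 / 2 * w n := by
            have := mul_le_mul_of_nonneg_left hsum hμ1
            linarith
        _ = (μ + 1) / 2 * ∑ k ∈ Finset.range n, cgG n w (X k)
            + Real.exp (t * L) / 2 * w n := by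
            simp only [hXdef]
            norm_num
  · -- trivial path [1, n]
    push_neg at hc
    refine ⟨[1, n], ⟨?_, rfl, ?_, ?_⟩, ?_⟩
    · exact List.isChain_cons_cons.2 ⟨by omega, List.isChain_singleton n⟩
    · rfl
    · intro j hj
      simp only [List.mem_cons, List.not_mem_nil, or_false] at hj
      rcases hj with h | h <;> omega
    · have hlen : cgLen n w [1, n] = ((n : ℝ) - (1 + (n : ℝ)) / 2) * w n := by
        simp [cgLen]
      rw [hlen]
      unfold cgF
      have h1 : n - 1 ≤ b 0 := by omega
      have h2 : (n : ℝ) - 1 ≤ X 0 := by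
        have : ((n - 1 : ℕ) : ℝ) ≤ (b 0 : ℝ) := by exact_mod_cast h1
        have h3 : ((n - 1 : ℕ) : ℝ) = (n : ℝ) - 1 := by
          push_cast [Nat.cast_sub (by omega : 1 ≤ n)]; ring
        rw [h3] at this
        exact le_trans this (hbX 0)
      have hsum : 0 ≤ ∑ k ∈ Finset.range n, cgH n w μ (t + k) := by
        apply Finset.sum_nonneg
        intro i _
        rw [hHeq i]
        exact hHnonneg i
      have hX0' : X 0 = Real.exp (t * L) := by
        simp only [hXdef]
        norm_num
      have := hw n
      have hμ1 : (0:ℝ) ≤ (μ + 1) / 2 := by linarith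
      rw [← hX0']
      nlinarith [mul_nonneg hμ1 hsum]

lemma bdd_intervalIntegrable {f : ℝ → ℝ} (hf : Measurable f) {a b C : ℝ}
    (h : ∀ x ∈ Set.uIcc a b, |f x| ≤ C) : IntervalIntegrable f MeasureTheory.volume a b := by
  rw [intervalIntegrable_iff]
  apply MeasureTheory.Integrable.mono' (g := fun _ => C)
    (MeasureTheory.integrableOn_const measure_Ioc_lt_top.ne)
    hf.aestronglyMeasurable.restrict
  apply MeasureTheory.ae_restrict_of_forall_mem measurableSet_uIoc
  intro x hx
  exact h x (Set.uIoc_subset_uIcc hx)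

lemma cgG_measurable (n : ℕ) (w : ℕ → ℝ) : Measurable (cgG n w) := by
  unfold cgG
  apply Measurable.ite
  · exact Nat.measurable_floor measurableSet_Iic
  · exact measurable_id.mul (measurable_from_top.comp
      (measurable_from_top.comp Nat.measurable_floor))
  · exact measurable_const

lemma cgH_measurable (n : ℕ) (w : ℕ → ℝ) (μ : ℝ) : Measurable (cgH n w μ) :=
  (cgG_measurable n w).comp
    (Real.continuous_exp.comp (continuous_id.mul continuous_const)).measurable

lemma cgG_le (n : ℕ) (hn : 2 ≤ n) (w : ℕ → ℝ) (hw : ∀ j, 0 ≤ w j) (y : ℝ) (hy : 0 ≤ y) :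
    cgG n w y ≤ y * ∑ ℓ ∈ Finset.Icc 1 n, w ℓ := by
  have hW : 0 ≤ ∑ ℓ ∈ Finset.Icc 1 n, w ℓ := Finset.sum_nonneg fun i _ => hw i
  unfold cgG
  split
  · rename_i hcond
    apply mul_le_mul_of_nonneg_left _ hy
    apply Finset.single_le_sum (fun i _ => hw i)
    simp only [Finset.mem_Icc]
    omega
  · positivity

lemma cg_integral (n : ℕ) (hn : 2 ≤ n) (w : ℕ → ℝ) (hw : ∀ j, 0 ≤ w j)
    (μ : ℝ) (hμ2 : 2 ≤ μ) (hL1 : 1 ≤ Real.log μ) (hlog : Real.log μ = (μ + 1) / μ) :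
    ∫ t in (0:ℝ)..1, cgF n w μ t ≤ μ / 2 * ∑ ℓ ∈ Finset.Icc 1 n, w ℓ := by
  have hμ0 : (0:ℝ) < μ := by linarith
  set L := Real.log μ with hLdef
  have hL0 : (0:ℝ) < L := by linarith
  set W := ∑ ℓ ∈ Finset.Icc 1 n, w ℓ with hWdef
  have hW0 : 0 ≤ W := Finset.sum_nonneg fun i _ => hw i
  have hexpL : Real.exp L = μ := Real.exp_log hμ0
  have Hnn : ∀ τ : ℝ, 0 ≤ cgH n w μ τ := by
    intro τ
    unfold cgH
    exact cgG_nonneg n w hw _ (Real.exp_pos _).le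
  have Hle : ∀ τ : ℝ, cgH n w μ τ ≤ Real.exp (τ * L) * W := by
    intro τ
    rw [hWdef]
    unfold cgH
    exact cgG_le n hn w hw _ (Real.exp_pos _).le
  have Hint : ∀ a b : ℝ, IntervalIntegrable (cgH n w μ) MeasureTheory.volume a b := by
    intro a b
    apply bdd_intervalIntegrable (cgH_measurable n w μ) (C := Real.exp ((|a| + |b|) * L) * W)
    intro x hx
    rw [abs_of_nonneg (Hnn x)]
    refine le_trans (Hle x) (mul_le_mul_of_nonneg_right (Real.exp_le_exp.2 ?_) hW0)
    have hx' : x ≤ max a b := hx.2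
    have : max a b ≤ |a| + |b| := by
      rcases le_total a b with h | h
      · simp [max_eq_right h]; cases abs_cases b <;> cases abs_cases a <;> nlinarith
      · simp [max_eq_left h]; cases abs_cases b <;> cases abs_cases a <;> nlinarith
    nlinarith
  -- expand the integral of cgF
  have hFeq : cgF n w μ = fun t =>
      (μ + 1) / 2 * ∑ k ∈ Finset.range n, cgH n w μ (t + k)
        + Real.exp (t * L) * (w n / 2) := by
    funext t; unfold cgF; ring
  have hint_sum_each : ∀ k : ℕ, IntervalIntegrable (fun t => cgH n w μ (t + k))
      MeasureTheory.volume 0 1 := by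
    intro k
    apply bdd_intervalIntegrable
      ((cgH_measurable n w μ).comp (measurable_id.add_const _))
      (C := Real.exp ((1 + k) * L) * W)
    intro x hx
    show |cgH n w μ (x + k)| ≤ _
    rw [abs_of_nonneg (Hnn _)]
    refine le_trans (Hle _) (mul_le_mul_of_nonneg_right (Real.exp_le_exp.2 ?_) hW0)
    have hx1 : x ≤ 1 := by
      rcases hx with ⟨_, h2⟩
      simpa using h2
    nlinarith [Nat.cast_nonneg (α := ℝ) k]
  have hint_sum : IntervalIntegrable (fun t => ∑ k ∈ Finset.range n, cgH n w μ (t + k))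
      MeasureTheory.volume 0 1 := by
    have h := IntervalIntegrable.sum (μ := MeasureTheory.volume) (a := (0:ℝ)) (b := (1:ℝ))
      (Finset.range n) (f := fun (k : ℕ) => fun t => cgH n w μ (t + k))
      (fun k _ => hint_sum_each k)
    have heq : (∑ k ∈ Finset.range n, fun t => cgH n w μ (t + (k:ℕ))) =
        fun t => ∑ k ∈ Finset.range n, cgH n w μ (t + k) := by
      funext t
      simp [Finset.sum_apply]
    rwa [heq] at h
  have hint_exp : IntervalIntegrable (fun t => Real.exp (t * L) * (w n / 2))
      MeasureTheory.volume 0 1 :=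
    ((Real.continuous_exp.comp (continuous_id.mul continuous_const)).mul
      continuous_const).intervalIntegrable 0 1
  have e2 : (∫ t in (0:ℝ)..1, Real.exp (t * L)) = (μ - 1) / L := by
    rw [intervalIntegral.integral_comp_mul_right Real.exp (ne_of_gt hL0)]
    simp [integral_exp, hexpL, smul_eq_mul]
    ring
  have e1 : ∀ k : ℕ, (∫ t in (0:ℝ)..1, cgH n w μ (t + k))
      = ∫ τ in ((k:ℕ):ℝ)..(((k+1:ℕ)):ℝ), cgH n w μ τ := by
    intro k
    rw [intervalIntegral.integral_comp_add_right (cgH n w μ) (k:ℝ)]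
    norm_num [add_comm]
  have hsplit : (∫ t in (0:ℝ)..1, cgF n w μ t)
      = (μ + 1) / 2 * ∑ k ∈ Finset.range n, (∫ τ in ((k:ℕ):ℝ)..(((k+1:ℕ)):ℝ), cgH n w μ τ)
        + (μ - 1) / L * (w n / 2) := by
    rw [hFeq]
    rw [intervalIntegral.integral_add (hint_sum.const_mul _) hint_exp]
    rw [intervalIntegral.integral_const_mul]
    rw [intervalIntegral.integral_finset_sum (fun k _ => hint_sum_each k)]
    rw [intervalIntegral.integral_mul_const]
    rw [e2]
    rw [Finset.sum_congr rfl fun k _ => e1 k]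
  have hadj : ∑ k ∈ Finset.range n, (∫ τ in ((k:ℕ):ℝ)..(((k+1:ℕ)):ℝ), cgH n w μ τ)
      = ∫ τ in (0:ℝ)..(n:ℝ), cgH n w μ τ := by
    have := intervalIntegral.sum_integral_adjacent_intervals
      (a := fun k : ℕ => (k:ℝ)) (n := n) (f := cgH n w μ) (fun k _ => Hint _ _)
    simpa using this
  -- partition of [0, n] at the points log(b)/L
  set c : ℕ → ℝ := fun i => if i = n - 1 then (n:ℝ) else Real.log (i+1) / L with hcdef
  have hc0 : c 0 = 0 := by
    simp only [hcdef]
    rw [if_neg (by omega)]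
    norm_num
  have hclast : c (n-1) = (n:ℝ) := by simp [hcdef]
  have hLne : L ≠ 0 := ne_of_gt hL0
  have hexpInt : ∀ a b C : ℝ, (∫ τ in a..b, Real.exp (τ * L) * C)
      = (Real.exp (b * L) - Real.exp (a * L)) / L * C := by
    intro a b C
    rw [intervalIntegral.integral_mul_const, intervalIntegral.integral_comp_mul_right
      Real.exp hLne, integral_exp, smul_eq_mul]
    ring
  have hpiece1 : ∀ i : ℕ, i + 2 < n →
      (∫ τ in c i..c (i+1), cgH n w μ τ) = w (n - (i+1)) / L := by
    intro i hi
    have hci : c i = Real.log ((i:ℝ)+1) / L := by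
      simp only [hcdef]; rw [if_neg (by omega)]
    have hci1 : c (i+1) = Real.log ((i:ℝ)+2) / L := by
      simp only [hcdef]; rw [if_neg (by omega)]; push_cast; ring_nf
    have hi1pos : (0:ℝ) < (i:ℝ) + 1 := by positivity
    have hi2pos : (0:ℝ) < (i:ℝ) + 2 := by positivity
    have hlogle : Real.log ((i:ℝ)+1) ≤ Real.log ((i:ℝ)+2) :=
      Real.log_le_log hi1pos (by linarith)
    have hab : c i ≤ c (i+1) := by
      rw [hci, hci1]
      gcongr
    have hstep1 : (∫ τ in c i..c (i+1), cgH n w μ τ)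
        = ∫ τ in c i..c (i+1), Real.exp (τ * L) * w (n - (i+1)) := by
      apply intervalIntegral.integral_congr_ae
      have hb_null : ∀ᵐ τ ∂(MeasureTheory.volume : MeasureTheory.Measure ℝ),
          τ ≠ c (i+1) := by
        rw [MeasureTheory.ae_iff]
        have : {τ : ℝ | ¬ τ ≠ c (i+1)} = {c (i+1)} := by
          ext τ; simp
        rw [this]
        exact MeasureTheory.measure_singleton _
      filter_upwards [hb_null] with τ hτ hmem
      rw [Set.uIoc_of_le hab] at hmem
      have hτa : c i < τ := hmem.1
      have hτb : τ < c (i+1) := lt_of_le_of_ne hmem.2 hτ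
      have h1 : ((i:ℝ) + 1) ≤ Real.exp (τ * L) := by
        rw [← Real.exp_log hi1pos]
        apply Real.exp_le_exp.2
        rw [hci] at hτa
        calc Real.log ((i:ℝ)+1) = Real.log ((i:ℝ)+1) / L * L := by field_simp
        _ ≤ τ * L := mul_le_mul_of_nonneg_right hτa.le hL0.le
      have h2 : Real.exp (τ * L) < (i:ℝ) + 2 := by
        rw [← Real.exp_log hi2pos]
        apply Real.exp_lt_exp.2
        rw [hci1] at hτb
        calc τ * L < Real.log ((i:ℝ)+2) / L * L := mul_lt_mul_of_pos_right hτb hL0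
        _ = Real.log ((i:ℝ)+2) := by field_simp
      have hfloor : ⌊Real.exp (τ * L)⌋₊ = i + 1 := by
        rw [Nat.floor_eq_iff (by positivity)]
        constructor
        · push_cast; linarith
        · push_cast; linarith
      unfold cgH cgG
      rw [← hLdef, hfloor, if_pos (by omega)]
    rw [hstep1, hexpInt]
    rw [hci, hci1]
    have hea : Real.exp (Real.log ((i:ℝ)+1) / L * L) = (i:ℝ)+1 := by
      rw [div_mul_cancel₀ _ hLne, Real.exp_log hi1pos]
    have heb : Real.exp (Real.log ((i:ℝ)+2) / L * L) = (i:ℝ)+2 := by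
      rw [div_mul_cancel₀ _ hLne, Real.exp_log hi2pos]
    rw [hea, heb]
    ring
  have hpiece2 : (∫ τ in c (n-2)..c (n-1), cgH n w μ τ) = 0 := by
    have hcn2 : c (n-2) = Real.log ((n:ℝ)-1) / L := by
      simp only [hcdef]; rw [if_neg (by omega)]
      congr 1
      have : ((n - 2 : ℕ) : ℝ) = (n:ℝ) - 2 := by
        push_cast [Nat.cast_sub (by omega : 2 ≤ n)]; ring
      rw [this]; ring_nf
    have hn1pos : (0:ℝ) < (n:ℝ) - 1 := by
      have : (2:ℝ) ≤ (n:ℝ) := by exact_mod_cast hn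
      linarith
    have hab : c (n-2) ≤ c (n-1) := by
      rw [hcn2, hclast]
      have h1 : Real.log ((n:ℝ)-1) ≤ (n:ℝ) - 2 := by
        have := Real.log_le_sub_one_of_pos hn1pos
        linarith
      have hlognn : 0 ≤ Real.log ((n:ℝ)-1) := Real.log_nonneg (by
        have : (2:ℝ) ≤ (n:ℝ) := by exact_mod_cast hn
        linarith)
      have h2 : Real.log ((n:ℝ)-1) / L ≤ Real.log ((n:ℝ)-1) := div_le_self hlognn hL1
      have : (2:ℝ) ≤ (n:ℝ) := by exact_mod_cast hn
      linarith
    have heq : Set.EqOn (cgH n w μ) (fun _ => (0:ℝ)) (Set.uIcc (c (n-2)) (c (n-1))) := by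
      intro τ hτ
      rw [Set.uIcc_of_le hab] at hτ
      have hτa : c (n-2) ≤ τ := hτ.1
      have h1 : ((n:ℝ) - 1) ≤ Real.exp (τ * L) := by
        rw [← Real.exp_log hn1pos]
        apply Real.exp_le_exp.2
        rw [hcn2] at hτa
        calc Real.log ((n:ℝ)-1) = Real.log ((n:ℝ)-1) / L * L := by field_simp
        _ ≤ τ * L := mul_le_mul_of_nonneg_right hτa hL0.le
      have hfloor : n - 1 ≤ ⌊Real.exp (τ * L)⌋₊ := by
        apply Nat.le_floor
        have : ((n - 1 : ℕ) : ℝ) = (n:ℝ) - 1 := by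
          push_cast [Nat.cast_sub (by omega : 1 ≤ n)]; ring
        rw [this]; exact h1
      show cgH n w μ τ = 0
      unfold cgH cgG
      rw [← hLdef]
      rw [if_neg (by omega)]
    rw [intervalIntegral.integral_congr heq]
    simp
  have hadj2 : ∑ i ∈ Finset.range (n-1), (∫ τ in c i..c (i+1), cgH n w μ τ)
      = ∫ τ in (0:ℝ)..(n:ℝ), cgH n w μ τ := by
    have := intervalIntegral.sum_integral_adjacent_intervals
      (a := c) (n := n-1) (f := cgH n w μ) (fun k _ => Hint _ _)
    rw [hc0, hclast] at this
    exact this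
  have hsum_eval : ∑ i ∈ Finset.range (n-1), (∫ τ in c i..c (i+1), cgH n w μ τ)
      = (∑ i ∈ Finset.range (n-2), w (n - (i+1))) / L := by
    have h1 : n - 1 = (n-2) + 1 := by omega
    rw [h1, Finset.sum_range_succ]
    have h2 : n - 2 + 1 = n - 1 := by omega
    rw [h2, hpiece2, add_zero, Finset.sum_div]
    apply Finset.sum_congr rfl
    intro i hi
    exact hpiece1 i (by have := Finset.mem_range.1 hi; omega)
  -- final combination
  have hμL : μ * L = μ + 1 := by
    rw [hlog]; field_simp
  set S := ∑ i ∈ Finset.range (n-2), w (n - (i+1)) with hSdef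
  have hIeq : (∫ t in (0:ℝ)..1, cgF n w μ t)
      = (μ + 1) / 2 * (S / L) + (μ - 1) / L * (w n / 2) := by
    rw [hsplit, hadj, ← hadj2, hsum_eval]
  have hkey1 : (μ + 1) / 2 * (S / L) = μ / 2 * S := by
    have hq : (μ + 1) / L = μ := by
      rw [hlog]
      field_simp
    calc (μ + 1) / 2 * (S / L) = (μ + 1) / L * S / 2 := by ring
    _ = μ * S / 2 := by rw [hq]
    _ = μ / 2 * S := by ring
  have hS0 : 0 ≤ S := Finset.sum_nonneg fun i _ => hw _
  have hkey2 : (μ - 1) / L * (w n / 2) ≤ μ / 2 * w n := by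
    have h1 : (μ - 1) / L ≤ μ - 1 := div_le_self (by linarith) hL1
    have := hw n
    nlinarith
  have hSsum : S = ∑ ℓ ∈ Finset.Icc 2 (n-1), w ℓ := by
    apply Finset.sum_nbij' (i := fun i => n - (i+1)) (j := fun ℓ => n - 1 - ℓ)
    · intro a ha
      simp only [Finset.mem_range] at ha
      simp only [Finset.mem_Icc]
      omega
    · intro b hb
      simp only [Finset.mem_Icc] at hb
      simp only [Finset.mem_range]
      omega
    · intro a ha
      simp only [Finset.mem_range] at ha
      omega
    · intro b hb
      simp only [Finset.mem_Icc] at hb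
      omega
    · intro a _
      rfl
  have hnnot : n ∉ Finset.Icc 2 (n-1) := by
    simp only [Finset.mem_Icc]
    omega
  have hfin : S + w n ≤ W := by
    rw [hSsum, hWdef]
    have h1 : ∑ ℓ ∈ Finset.Icc 2 (n-1), w ℓ + w n
        = ∑ ℓ ∈ insert n (Finset.Icc 2 (n-1)), w ℓ := by
      rw [Finset.sum_insert hnnot]; ring
    rw [h1]
    apply Finset.sum_le_sum_of_subset_of_nonneg
    · intro x hx
      simp only [Finset.mem_insert, Finset.mem_Icc] at hx
      simp only [Finset.mem_Icc]
      omega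
    · intro i _ _
      exact hw i
  rw [hIeq, hkey1]
  have hμ2' : (0:ℝ) ≤ μ / 2 := by linarith
  nlinarith [mul_le_mul_of_nonneg_left hfin hμ2']

lemma cgF_measurable (n : ℕ) (w : ℕ → ℝ) (μ : ℝ) : Measurable (cgF n w μ) := by
  unfold cgF
  apply Measurable.add
  · exact measurable_const.mul (Finset.measurable_sum (Finset.range n)
      (fun k _ => (cgH_measurable n w μ).comp (measurable_id.add_const _)))
  · apply Measurable.mul_const
    apply Measurable.div_const
    exact (Real.continuous_exp.comp (continuous_id.mul continuous_const)).measurable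

lemma cgF_intervalIntegrable (n : ℕ) (hn : 2 ≤ n) (w : ℕ → ℝ) (hw : ∀ j, 0 ≤ w j)
    (μ : ℝ) (hμ2 : 2 ≤ μ) (hL1 : 1 ≤ Real.log μ) :
    IntervalIntegrable (cgF n w μ) MeasureTheory.volume 0 1 := by
  have hμ0 : (0:ℝ) < μ := by linarith
  set L := Real.log μ with hLdef
  have hL0 : (0:ℝ) < L := by linarith
  set W := ∑ ℓ ∈ Finset.Icc 1 n, w ℓ with hWdef
  have hW0 : 0 ≤ W := Finset.sum_nonneg fun i _ => hw i
  have Hnn : ∀ τ : ℝ, 0 ≤ cgH n w μ τ := by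
    intro τ
    unfold cgH
    exact cgG_nonneg n w hw _ (Real.exp_pos _).le
  have Hle : ∀ τ : ℝ, cgH n w μ τ ≤ Real.exp (τ * L) * W := by
    intro τ
    rw [hWdef]
    unfold cgH
    exact cgG_le n hn w hw _ (Real.exp_pos _).le
  have hint_sum_each : ∀ k : ℕ, IntervalIntegrable (fun t => cgH n w μ (t + k))
      MeasureTheory.volume 0 1 := by
    intro k
    apply bdd_intervalIntegrable
      ((cgH_measurable n w μ).comp (measurable_id.add_const _))
      (C := Real.exp ((1 + k) * L) * W)
    intro x hx
    show |cgH n w μ (x + k)| ≤ _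
    rw [abs_of_nonneg (Hnn _)]
    refine le_trans (Hle _) (mul_le_mul_of_nonneg_right (Real.exp_le_exp.2 ?_) hW0)
    have hx1 : x ≤ 1 := by
      rcases hx with ⟨_, h2⟩
      simpa using h2
    nlinarith [Nat.cast_nonneg (α := ℝ) k]
  have hint_sum : IntervalIntegrable (fun t => ∑ k ∈ Finset.range n, cgH n w μ (t + k))
      MeasureTheory.volume 0 1 := by
    have h := IntervalIntegrable.sum (μ := MeasureTheory.volume) (a := (0:ℝ)) (b := (1:ℝ))
      (Finset.range n) (f := fun (k : ℕ) => fun t => cgH n w μ (t + k))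
      (fun k _ => hint_sum_each k)
    have heq : (∑ k ∈ Finset.range n, fun t => cgH n w μ (t + (k:ℕ))) =
        fun t => ∑ k ∈ Finset.range n, cgH n w μ (t + k) := by
      funext t
      simp [Finset.sum_apply]
    rwa [heq] at h
  have hint_exp : IntervalIntegrable (fun t => Real.exp (t * L) / 2 * w n)
      MeasureTheory.volume 0 1 :=
    (((Real.continuous_exp.comp (continuous_id.mul continuous_const)).div_const 2).mul
      continuous_const).intervalIntegrable 0 1
  have : cgF n w μ = fun t =>
      (μ + 1) / 2 * ∑ k ∈ Finset.range n, cgH n w μ (t + k)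
        + Real.exp (t * L) / 2 * w n := by
    funext t; unfold cgF; rfl
  rw [this]
  exact (hint_sum.const_mul _).add hint_exp

lemma exists_le_intervalIntegral (f : ℝ → ℝ) (hf : Measurable f)
    (hint : IntervalIntegrable f MeasureTheory.volume 0 1) :
    ∃ t ∈ Set.Ioc (0:ℝ) 1, f t ≤ ∫ s in (0:ℝ)..1, f s := by
  set ν := MeasureTheory.volume.restrict (Set.Ioc (0:ℝ) 1) with hνdef
  haveI hprob : MeasureTheory.IsProbabilityMeasure ν := by
    constructor
    rw [hνdef, MeasureTheory.Measure.restrict_apply_univ, Real.volume_Ioc]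
    norm_num
  have hfi : MeasureTheory.Integrable f ν := by
    rw [intervalIntegrable_iff_integrableOn_Ioc_of_le zero_le_one] at hint
    exact hint
  have hpos := MeasureTheory.measure_le_average_pos
    (MeasureTheory.IsProbabilityMeasure.ne_zero ν) hfi
  have hmeas : MeasurableSet {x : ℝ | f x ≤ ⨍ a, f a ∂ν} :=
    measurableSet_le hf measurable_const
  rw [hνdef, MeasureTheory.Measure.restrict_apply hmeas] at hpos
  obtain ⟨t, ht⟩ := MeasureTheory.nonempty_of_measure_ne_zero hpos.ne'
  refine ⟨t, ht.2, ?_⟩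
  have havg : ⨍ a, f a ∂ν = ∫ a, f a ∂ν := MeasureTheory.average_eq_integral (μ := ν) f
  have hIoc : ∫ a, f a ∂ν = ∫ s in (0:ℝ)..1, f s :=
    (intervalIntegral.integral_of_le zero_le_one).symm
  have := ht.1
  rw [Set.mem_setOf_eq, havg, hIoc] at this
  exact this

/-- the shortest 1⇝n path in the concatenation graph has length at most
(μ*/2)·∑ w_ℓ, where μ* < 3.5912 solves μ ln μ = μ + 1. -/
theorem shortest_cg_path_length_bound (n : ℕ) (hn : 1 ≤ n) (w : ℕ → ℝ)
    (hw1 : w 1 = 0) (hw : ∀ j, 0 ≤ w j)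
    (μ : ℝ) (hμ1 : 1 < μ) (hμ : μ * Real.log μ = μ + 1) :
    μ < 3.5912 ∧
      ∃ p : List ℕ, IsCGPath n p ∧ cgLen n w p ≤ μ / 2 * ∑ ℓ ∈ Finset.Icc 1 n, w ℓ := by
  have hμ0 : (0:ℝ) < μ := lt_trans one_pos hμ1
  have hlog : Real.log μ = (μ + 1) / μ := by
    field_simp
    linarith [hμ]
  have hL1 : 1 ≤ Real.log μ := by
    rw [hlog, le_div_iff₀ hμ0]
    linarith
  have hμ2 : (2:ℝ) ≤ μ := by
    have h1 := Real.add_one_le_exp (1:ℝ)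
    have h2 : Real.exp 1 ≤ Real.exp (Real.log μ) := Real.exp_le_exp.2 hL1
    rw [Real.exp_log hμ0] at h2
    linarith
  have hup : μ < 3.5912 := by
    by_contra h
    push_neg at h
    have h1 : Real.log μ ≤ 1 + 1250/4489 := by
      rw [hlog]
      have h2 : (1:ℝ)/μ ≤ 1250/4489 := by
        rw [div_le_div_iff₀ hμ0 (by norm_num)]
        nlinarith
      have : (μ + 1)/μ = 1 + 1/μ := by field_simp
      rw [this]
      linarith
    have h2 : μ ≤ Real.exp (1 + 1250/4489) := by
      calc μ = Real.exp (Real.log μ) := (Real.exp_log hμ0).symm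
      _ ≤ Real.exp (1 + 1250/4489) := Real.exp_le_exp.2 h1
    have h3 : Real.exp ((1250:ℝ)/4489) ≤
        (∑ m ∈ Finset.range 6, ((1250:ℝ)/4489) ^ m / m.factorial) +
          ((1250:ℝ)/4489) ^ 6 * (6 + 1) / (Nat.factorial 6 * 6) :=
      Real.exp_bound' (by norm_num) (by norm_num) (by norm_num : 0 < 6)
    have hS : (∑ m ∈ Finset.range 6, ((1250:ℝ)/4489) ^ m / m.factorial) +
          ((1250:ℝ)/4489) ^ 6 * (6 + 1) / (Nat.factorial 6 * 6) ≤ 1.32109181 := by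
      simp [Finset.sum_range_succ, Nat.factorial]
      norm_num
    have he : Real.exp 1 < 2.7182818286 := Real.exp_one_lt_d9
    have h4 : Real.exp (1 + 1250/4489) = Real.exp 1 * Real.exp (1250/4489) := by
      rw [← Real.exp_add]
    have hexppos : (0:ℝ) < Real.exp (1250/4489) := Real.exp_pos _
    have h5 : μ < 2.7182818286 * 1.32109181 := by
      rw [h4] at h2
      calc μ ≤ Real.exp 1 * Real.exp (1250/4489) := h2
      _ < 2.7182818286 * Real.exp (1250/4489) := mul_lt_mul_of_pos_right he hexppos
      _ ≤ 2.7182818286 * 1.32109181 := by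
          have := le_trans h3 hS
          nlinarith
    nlinarith
  refine ⟨hup, ?_⟩
  rcases eq_or_lt_of_le hn with h1 | h2
  · -- n = 1
    refine ⟨[1], ⟨List.isChain_singleton 1, rfl, ?_, by simp; omega⟩, ?_⟩
    · rw [← h1]
      rfl
    · have hlen : cgLen n w [1] = 0 := by simp [cgLen]
      rw [hlen, ← h1]
      simp [hw1]
  · -- n ≥ 2
    obtain ⟨t, ht, hle⟩ := exists_le_intervalIntegral (cgF n w μ) (cgF_measurable n w μ)
      (cgF_intervalIntegrable n h2 w hw μ hμ2 hL1)
    obtain ⟨p, hp, hlen⟩ := cg_pointwise n h2 w hw μ hμ2 hL1 t ht.1.le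
    exact ⟨p, hp, hlen.trans (hle.trans (cg_integral n h2 w hw μ hμ2 hL1 hlog))⟩
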